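/- arXiv:2303.13697 — 3 statements merged into one kernel-verified Lean document; each statement's English description precedes it below -/
import Mathlib

section
/- Let φ be a set of constraints consisting of linear constraints C and one-hot constraints O, and let rlx(φ) be its convex relaxation (binary constraints b ∈ {0,1} replaced by 0 ≤ b ≤ 1). A solution α is feasible for φ if and only if α is feasible for rlx(φ) and SoI(α) ≤ 0, where SoI(α) = Σ over one-hot groups of (1 - max over the group's variables of α). -/
/-- a solution α is feasible for φ = C ∪ O (linear constraints plus
one-hot constraints over groups G k) iff α is feasible for the convex relaxation
rlx(φ) and SoI(α) ≤ 0. -/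
theorem feasible_iff_relaxed_and_soi_le_zero
    (n K : ℕ) (Clin : (Fin n → ℝ) → Prop)
    (G : Fin K → Finset (Fin n)) (hG : ∀ k, (G k).Nonempty)
    (α : Fin n → ℝ) :
    (Clin α ∧ ∀ k, (∑ x ∈ G k, α x = 1 ∧ ∀ x ∈ G k, α x = 0 ∨ α x = 1)) ↔
      ((Clin α ∧ ∀ k, (∑ x ∈ G k, α x = 1 ∧ ∀ x ∈ G k, 0 ≤ α x ∧ α x ≤ 1)) ∧
        ∑ k, (1 - (G k).sup' (hG k) α) ≤ 0) := by
  constructor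
  · rintro ⟨hC, h⟩
    refine ⟨⟨hC, fun k => ⟨(h k).1, fun x hx => ?_⟩⟩, ?_⟩
    · rcases (h k).2 x hx with h0 | h0 <;> simp [h0]
    · apply Finset.sum_nonpos
      intro k _
      obtain ⟨hsum, hbin⟩ := h k
      have hex : ∃ x ∈ G k, α x = 1 := by
        by_contra hno
        push_neg at hno
        have hz : ∀ x ∈ G k, α x = 0 := fun x hx => (hbin x hx).resolve_right (hno x hx)
        have : ∑ x ∈ G k, α x = 0 := Finset.sum_eq_zero hz
        linarith
      obtain ⟨x, hx, hx1⟩ := hex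
      have := Finset.le_sup' α hx
      rw [hx1] at this
      linarith
  · rintro ⟨⟨hC, h⟩, hsoi⟩
    refine ⟨hC, fun k => ⟨(h k).1, ?_⟩⟩
    have hterm : ∀ j : Fin K, 0 ≤ 1 - (G j).sup' (hG j) α := by
      intro j
      have : (G j).sup' (hG j) α ≤ 1 :=
        Finset.sup'_le _ _ fun x hx => ((h j).2 x hx).2
      linarith
    have hzero : ∀ j ∈ Finset.univ, (1 - (G j).sup' (hG j) α) = 0 := by
      rw [← Finset.sum_eq_zero_iff_of_nonneg (fun j _ => hterm j)]
      have : 0 ≤ ∑ j, (1 - (G j).sup' (hG j) α) :=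
        Finset.sum_nonneg fun j _ => hterm j
      linarith
    have hsup : (G k).sup' (hG k) α = 1 := by
      have := hzero k (Finset.mem_univ k); linarith
    obtain ⟨x0, hx0, hx0v⟩ := Finset.exists_mem_eq_sup' (hG k) α
    rw [hsup] at hx0v
    have hsplit : α x0 + ∑ x ∈ (G k).erase x0, α x = 1 := by
      rw [Finset.add_sum_erase _ α hx0]; exact (h k).1
    have herz : ∑ x ∈ (G k).erase x0, α x = 0 := by
      rw [← hx0v] at hsplit; linarith
    have hez : ∀ x ∈ (G k).erase x0, α x = 0 := by
      rw [← Finset.sum_eq_zero_iff_of_nonneg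
        (fun x hx => ((h k).2 x (Finset.mem_of_mem_erase hx)).1)]
      exact herz
    intro x hx
    by_cases hxe : x = x0
    · right; rw [hxe, ← hx0v]
    · left; exact hez x (Finset.mem_erase.mpr ⟨hxe, hx⟩)
end

section
/- Let φ be a set of linear and one-hot constraints with a nonempty, compact relaxed feasible region. Then φ is feasible if and only if there exists a mode sequence f (a choice of one index per one-hot group) such that the minimum of the linear function f over rlx(φ) equals 0. -/
/-- for φ consisting of linear constraints and one-hot constraints
with nonempty compact relaxed feasible region S, φ is feasible iff there is a
mode sequence j whose linear objective has minimum 0 over S. -/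
theorem feasible_iff_exists_zero_cost_mode_sequence
    (K : ℕ) (m : Fin K → ℕ) (hm : ∀ k, 0 < m k)
    (Clin : ((k : Fin K) → Fin (m k) → ℝ) → Prop)
    (S : Set ((k : Fin K) → Fin (m k) → ℝ))
    (hS : S = {x | Clin x ∧ ∀ k, (∑ i, x k i = 1 ∧ ∀ i, 0 ≤ x k i ∧ x k i ≤ 1)})
    (hcompact : IsCompact S) (hne : S.Nonempty) :
    (∃ x, Clin x ∧ ∀ k, (∑ i, x k i = 1 ∧ ∀ i, x k i = 0 ∨ x k i = 1)) ↔
      ∃ j : (k : Fin K) → Fin (m k),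
        IsLeast ((fun x : (k : Fin K) → Fin (m k) → ℝ =>
          ∑ k, (1 - x k (j k))) '' S) 0 := by
  subst hS
  constructor
  · rintro ⟨x, hlin, hx⟩
    have hj : ∀ k, ∃ i, x k i = 1 := by
      intro k
      obtain ⟨hsum, h01⟩ := hx k
      have : ∃ i ∈ Finset.univ, x k i ≠ 0 := by
        apply Finset.exists_ne_zero_of_sum_ne_zero
        rw [hsum]; norm_num
      obtain ⟨i, -, hi⟩ := this
      exact ⟨i, (h01 i).resolve_left hi⟩
    choose j hjx using hj
    refine ⟨j, ⟨⟨x, ⟨hlin, fun k => ⟨(hx k).1, fun i => ?_⟩⟩, ?_⟩, ?_⟩⟩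
    · rcases (hx k).2 i with h | h <;> rw [h] <;> norm_num
    · simp only []
      rw [Finset.sum_eq_zero]
      intro k _
      rw [hjx k]; ring
    · rintro y ⟨z, ⟨-, hz⟩, rfl⟩
      apply Finset.sum_nonneg
      intro k _
      have := ((hz k).2 (j k)).2
      linarith
  · rintro ⟨j, ⟨y, ⟨hlin, hy⟩, hy0⟩, -⟩
    refine ⟨y, hlin, fun k => ⟨(hy k).1, fun i => ?_⟩⟩
    have hterm : ∀ k ∈ Finset.univ, (0:ℝ) ≤ 1 - y k (j k) := by
      intro k _
      have := ((hy k).2 (j k)).2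
      linarith
    have hall : ∀ k ∈ Finset.univ, (1:ℝ) - y k (j k) = 0 :=
      (Finset.sum_eq_zero_iff_of_nonneg hterm).mp hy0
    have hjk : y k (j k) = 1 := by have := hall k (Finset.mem_univ k); linarith
    by_cases hij : i = j k
    · right; rw [hij, hjk]
    · left
      have hsum := (hy k).1
      have herase : ∑ i' ∈ Finset.univ.erase (j k), y k i' = 0 := by
        have := Finset.add_sum_erase Finset.univ (y k) (Finset.mem_univ (j k))
        rw [hsum, hjk] at this
        linarith
      have := (Finset.sum_eq_zero_iff_of_nonneg (fun i' _ => ((hy k).2 i').1)).mp herase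
      exact this i (Finset.mem_erase.mpr ⟨hij, Finset.mem_univ i⟩)
end

section
/- Let α be a point in the relaxed feasible region of φ (linear plus relaxed one-hot constraints) with SoI(α) = 0 for the SoI function defined as the sum of per-group violations. Then α satisfies all binary constraints b ∈ {0,1} of φ, and moreover α is feasible for the precise problem φ. -/
/-- if α lies in the relaxed feasible region of φ and SoI(α) = 0,
then α satisfies all binary constraints of φ, and α is feasible for φ. -/
theorem soi_zero_implies_feasible
    (n K : ℕ) (Clin : (Fin n → ℝ) → Prop)
    (G : Fin K → Finset (Fin n)) (hG : ∀ k, (G k).Nonempty)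
    (α : Fin n → ℝ)
    (hrlx : Clin α ∧ ∀ k, (∑ x ∈ G k, α x = 1 ∧ ∀ x ∈ G k, 0 ≤ α x ∧ α x ≤ 1))
    (hsoi : ∑ k, (1 - (G k).sup' (hG k) α) = 0) :
    (∀ k, ∀ x ∈ G k, α x = 0 ∨ α x = 1) ∧
    (Clin α ∧ ∀ k, (∑ x ∈ G k, α x = 1 ∧ ∀ x ∈ G k, α x = 0 ∨ α x = 1)) := by
  obtain ⟨hC, hrel⟩ := hrlx
  have hbin : ∀ k, ∀ x ∈ G k, α x = 0 ∨ α x = 1 := by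
    intro k x hx
    -- each term of hsoi is nonneg
    have hnn : ∀ j : Fin K, 0 ≤ 1 - (G j).sup' (hG j) α := by
      intro j
      have : (G j).sup' (hG j) α ≤ 1 := by
        apply Finset.sup'_le
        intro b hb
        exact ((hrel j).2 b hb).2
      linarith
    have hzero : ∀ j : Fin K, 1 - (G j).sup' (hG j) α = 0 := by
      intro j
      have := (Finset.sum_eq_zero_iff_of_nonneg (fun j _ => hnn j)).mp hsoi
      exact this j (Finset.mem_univ j)
    have hsup : (G k).sup' (hG k) α = 1 := by have := hzero k; linarith
    -- there exists x0 with α x0 = 1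
    obtain ⟨x0, hx0, hx0v⟩ := Finset.exists_mem_eq_sup' (hG k) α
    rw [hsup] at hx0v
    by_cases hxx : x = x0
    · right; rw [hxx]; exact hx0v.symm
    · left
      have hsum := (hrel k).1
      have hrest : ∑ y ∈ (G k).erase x0, α y = 0 := by
        have := Finset.add_sum_erase (G k) α hx0
        linarith [this, hx0v]
      have := (Finset.sum_eq_zero_iff_of_nonneg
        (fun y hy => ((hrel k).2 y (Finset.mem_of_mem_erase hy)).1)).mp hrest
      exact this x (Finset.mem_erase.mpr ⟨hxx, hx⟩)
  exact ⟨hbin, hC, fun k => ⟨(hrel k).1, hbin k⟩⟩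
end
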